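/- Let x ∈ (0,1) and θ ∈ (0,1). Then for each ε > 0 and each α > 0: Σ_{k=1}^∞ x^{θ^k} k^{−1−ε} ≤ (4/ε) · α^ε · exp( ε ln ε + ε + e α^{−1} θ^{−1} ) · ( ln( α|ln x| + e ) )^{−ε}. -/

import Mathlib

set_option maxHeartbeats 1000000

open scoped Real

private lemma aux_step (ε : ℝ) (hε : 0 < ε) (a : ℝ) (ha : 1 ≤ a) :
    ε * (a + 1) ^ (-(1 + ε)) ≤ a ^ (-ε) - (a + 1) ^ (-ε) := by
  have ha0 : 0 < a := lt_of_lt_of_le one_pos ha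
  have hb0 : 0 < a + 1 := by linarith
  have hr0 : 0 < a / (a + 1) := div_pos ha0 hb0
  have hlog : Real.log (a / (a + 1)) ≤ a / (a + 1) - 1 := Real.log_le_sub_one_of_pos hr0
  have hsub : a / (a + 1) - 1 = -(1 / (a + 1)) := by field_simp; ring
  have h1 : 1 + ε / (a + 1) ≤ (a / (a + 1)) ^ (-ε) := by
    rw [Real.rpow_def_of_pos hr0]
    have h2 : ε / (a + 1) ≤ Real.log (a / (a + 1)) * (-ε) := by
      rw [hsub] at hlog
      have h3 : 1 / (a + 1) * ε ≤ -Real.log (a / (a + 1)) * ε :=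
        mul_le_mul_of_nonneg_right (by linarith) hε.le
      have e1 : ε / (a + 1) = 1 / (a + 1) * ε := by ring
      linarith
    have := Real.add_one_le_exp (Real.log (a / (a + 1)) * (-ε))
    linarith
  have hdiv : (a / (a + 1)) ^ (-ε) = a ^ (-ε) / (a + 1) ^ (-ε) :=
    Real.div_rpow ha0.le hb0.le _
  have hbpos : (0:ℝ) < (a + 1) ^ (-ε) := Real.rpow_pos_of_pos hb0 _
  have key : (a + 1) ^ (-ε) * (ε / (a + 1)) ≤ (a + 1) ^ (-ε) * ((a / (a + 1)) ^ (-ε) - 1) :=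
    mul_le_mul_of_nonneg_left (by linarith) hbpos.le
  have hmul : (a + 1) ^ (-ε) * ((a / (a + 1)) ^ (-ε) - 1) = a ^ (-ε) - (a + 1) ^ (-ε) := by
    rw [hdiv]; field_simp
  rw [hmul] at key
  have hexp : (a + 1) ^ (-(1 + ε)) = (a + 1)⁻¹ * (a + 1) ^ (-ε) := by
    rw [show -(1 + ε) = (-1) + (-ε) by ring, Real.rpow_add hb0, Real.rpow_neg_one]
  calc ε * (a + 1) ^ (-(1 + ε)) = (a + 1) ^ (-ε) * (ε / (a + 1)) := by
        rw [hexp]; field_simp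
    _ ≤ _ := key

private lemma aux_tail (ε : ℝ) (hε : 0 < ε) (n : ℕ) (hn : 1 ≤ n) :
    ∑' k : ℕ, ((k : ℝ) + n + 1) ^ (-(1 + ε)) ≤ (n : ℝ) ^ (-ε) / ε := by
  have hn1 : (1:ℝ) ≤ (n:ℝ) := by exact_mod_cast hn
  have hsum0 : Summable (fun k : ℕ => ((k:ℝ)) ^ (-(1+ε))) :=
    Real.summable_nat_rpow.2 (by linarith)
  have hsum : Summable (fun k : ℕ => ((k:ℝ) + n + 1) ^ (-(1+ε))) := by
    have h := (summable_nat_add_iff (f := fun k : ℕ => ((k:ℝ)) ^ (-(1+ε))) (n+1)).2 hsum0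
    refine h.congr fun k => ?_
    push_cast
    ring_nf
  apply Summable.tsum_le_of_sum_range_le hsum
  intro m
  have hstep : ∀ k : ℕ, ((k : ℝ) + n + 1) ^ (-(1 + ε)) ≤
      ((((k:ℕ):ℝ) + n) ^ (-ε) - (((k+1 : ℕ):ℝ) + n) ^ (-ε)) / ε := by
    intro k
    have ha : (1:ℝ) ≤ (k : ℝ) + n := by
      have : (0:ℝ) ≤ (k:ℝ) := Nat.cast_nonneg k
      linarith
    have h := aux_step ε hε ((k:ℝ) + n) ha
    rw [le_div_iff₀ hε]
    push_cast
    rw [show (k:ℝ) + 1 + (n:ℝ) = (k:ℝ) + (n:ℝ) + 1 by ring]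
    nlinarith [h]
  calc ∑ k ∈ Finset.range m, ((k : ℝ) + n + 1) ^ (-(1 + ε))
      ≤ ∑ k ∈ Finset.range m, (((((k:ℕ):ℝ) + n) ^ (-ε) - (((k+1:ℕ):ℝ) + n) ^ (-ε)) / ε) :=
        Finset.sum_le_sum fun k _ => hstep k
    _ = (∑ k ∈ Finset.range m, ((((k:ℕ):ℝ) + n) ^ (-ε) - (((k+1:ℕ):ℝ) + n) ^ (-ε))) / ε := by
        rw [Finset.sum_div]
    _ = ((((0:ℕ):ℝ) + (n:ℝ)) ^ (-ε) - ((m:ℝ) + n) ^ (-ε)) / ε := by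
        rw [Finset.sum_range_sub' (fun k : ℕ => ((k:ℝ) + n) ^ (-ε)) m]
    _ ≤ (n : ℝ) ^ (-ε) / ε := by
        have hm : (0:ℝ) ≤ ((m:ℝ) + n) ^ (-ε) := by positivity
        have h0 : (((0:ℕ):ℝ) + (n:ℝ)) = (n:ℝ) := by norm_num
        rw [h0]
        gcongr
        linarith

private lemma aux_srpow (ε : ℝ) (hε : 0 < ε) (s : ℝ) (hs : 0 < s) :
    s ^ ε ≤ (ε / Real.exp 1) ^ ε * Real.exp s := by
  have h1 : Real.log (s / ε) ≤ s / ε - 1 := Real.log_le_sub_one_of_pos (div_pos hs hε)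
  have h2 : Real.log (s / ε) = Real.log s - Real.log ε := Real.log_div hs.ne' hε.ne'
  have h3 : Real.log s * ε ≤ (Real.log ε - 1) * ε + s := by
    rw [h2] at h1
    have := mul_le_mul_of_nonneg_right h1 hε.le
    have e1 : (s / ε - 1) * ε = s - ε := by field_simp
    nlinarith
  have h4 : (ε / Real.exp 1) ^ ε * Real.exp s = Real.exp ((Real.log ε - 1) * ε + s) := by
    rw [Real.rpow_def_of_pos (div_pos hε (Real.exp_pos 1)),
      Real.log_div hε.ne' (Real.exp_pos 1).ne', Real.log_exp, ← Real.exp_add]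
  rw [Real.rpow_def_of_pos hs, h4]
  exact Real.exp_le_exp.2 h3

private lemma aux_zrpow (ε : ℝ) (hε : 0 < ε) (z : ℝ) (hz : 0 < z) :
    z ^ ε ≤ Real.exp (ε * z) := by
  rw [Real.rpow_def_of_pos hz]
  apply Real.exp_le_exp.2
  have := Real.log_le_sub_one_of_pos hz
  nlinarith

private lemma num_c4 (c e : ℝ) (hc0 : 0 < c) (hcc : c * c = e * e * e)
    (he : (2.7182818283 : ℝ) < e) : 4 ≤ c := by nlinarith

private lemma num_key2 (c v : ℝ) (hc : 4 ≤ c) (hv : 1 ≤ v) :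
    4 * (v - 1) ≤ 2 * c * v - c := by nlinarith

private lemma num_e2 (e : ℝ) (he : (2.7182818283 : ℝ) < e) : (2:ℝ) ≤ e * e := by nlinarith

private lemma num_h7 (l ti ee : ℝ) (h1 : l ≤ ti) (h2 : 0 < ti) (h3 : 2 ≤ ee) (h4 : 0 < l) :
    2 * l ≤ ee * ti := by nlinarith

private lemma num_final (p q E m eps ee : ℝ) (hp : 0 ≤ p) (hq : 0 ≤ q) (hE : 0 ≤ E)
    (hm : 0 ≤ m) (he : 0 ≤ ee) (heps : 0 < eps) :
    p * q * E * m * (ee / eps) + ee * (p * q) * E * m / eps ≤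
      4 / eps * q * (p * ee * E) * m := by
  have h1 : p * q * E * m * (ee / eps) + ee * (p * q) * E * m / eps =
      2 * (p * q * E * m * ee) / eps := by field_simp; ring
  have h2 : 4 / eps * q * (p * ee * E) * m = 4 * (p * q * E * m * ee) / eps := by
    field_simp
  rw [h1, h2, div_le_div_iff₀ heps heps]
  have hX : 0 ≤ p * q * E * m * ee := by positivity
  nlinarith

theorem sum_rpow_polynomial_le (x θ : ℝ) (hx : x ∈ Set.Ioo (0 : ℝ) 1)
    (hθ : θ ∈ Set.Ioo (0 : ℝ) 1) (ε : ℝ) (hε : 0 < ε) (α : ℝ) (hα : 0 < α) :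
    (∑' k : ℕ, x ^ (θ ^ (k + 1)) * ((k : ℝ) + 1) ^ (-(1 + ε))) ≤
      4 / ε * α ^ ε * Real.exp (ε * Real.log ε + ε + Real.exp 1 * α⁻¹ * θ⁻¹) *
        (Real.log (α * |Real.log x| + Real.exp 1)) ^ (-ε) := by
  obtain ⟨hx0, hx1⟩ := hx
  obtain ⟨hθ0, hθ1⟩ := hθ
  have hlogx : Real.log x < 0 := Real.log_neg hx0 hx1
  set L : ℝ := |Real.log x| with hLdef
  have hLeq : L = -Real.log x := abs_of_neg hlogx
  have hL : 0 < L := by rw [hLeq]; linarith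
  set l : ℝ := -Real.log θ with hldef
  have hl : 0 < l := by
    have := Real.log_neg hθ0 hθ1
    rw [hldef]; linarith
  set W : ℝ := α * L + Real.exp 1 with hWdef
  have hWe : Real.exp 1 ≤ W := by nlinarith [mul_pos hα hL]
  have hW0 : 0 < W := lt_of_lt_of_le (Real.exp_pos 1) hWe
  set M : ℝ := Real.log W with hMdef
  have hM1 : 1 ≤ M := by
    rw [hMdef]
    calc (1:ℝ) = Real.log (Real.exp 1) := (Real.log_exp 1).symm
      _ ≤ Real.log W := Real.log_le_log (Real.exp_pos 1) hWe
  have hM0 : 0 < M := lt_of_lt_of_le one_pos hM1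
  have hql : 0 < M / (2 * l) := div_pos hM0 (by linarith)
  obtain ⟨N, hN1, hNge, hNlt⟩ : ∃ N : ℕ, 1 ≤ N ∧ M / (2 * l) ≤ (N : ℝ) ∧
      (N : ℝ) < M / (2 * l) + 1 :=
    ⟨⌈M / (2 * l)⌉₊, Nat.ceil_pos.2 hql, Nat.le_ceil _, Nat.ceil_lt_add_one hql.le⟩
  have hNR : (0 : ℝ) < (N : ℝ) := by exact_mod_cast hN1
  -- θ ^ N lower bound
  have hθN0 : 0 < θ ^ N := pow_pos hθ0 N
  have hθN : θ * Real.exp (-(M / 2)) ≤ θ ^ N := by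
    have hθeq : θ = Real.exp (-l) := by rw [hldef, neg_neg, Real.exp_log hθ0]
    have h1 : θ ^ N = Real.exp ((N : ℝ) * (-l)) := by
      rw [Real.exp_nat_mul, ← hθeq]
    have h2 : θ * Real.exp (-(M / 2)) = Real.exp (-l + -(M / 2)) := by
      rw [Real.exp_add, ← hθeq]
    rw [h1, h2]
    apply Real.exp_le_exp.2
    have : (N : ℝ) * l < (M / (2 * l) + 1) * l := by
      exact mul_lt_mul_of_pos_right hNlt hl
    have he : (M / (2 * l) + 1) * l = M / 2 + l := by field_simp
    nlinarith
  set T : ℝ := θ ^ N with hTdef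
  -- the series terms
  set f : ℕ → ℝ := fun k => x ^ (θ ^ (k + 1)) * ((k : ℝ) + 1) ^ (-(1 + ε)) with hfdef
  have hfterm : ∀ k : ℕ, x ^ (θ ^ (k + 1)) = Real.exp (-(L * θ ^ (k + 1))) := by
    intro k
    rw [Real.rpow_def_of_pos hx0, hLeq]
    ring_nf
  have hf_nonneg : ∀ k, 0 ≤ f k := by
    intro k
    apply mul_nonneg (Real.rpow_nonneg hx0.le _) (Real.rpow_nonneg (by positivity) _)
  have hfle : ∀ k, f k ≤ ((k : ℝ) + 1) ^ (-(1 + ε)) := by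
    intro k
    have h1 : x ^ (θ ^ (k + 1)) ≤ 1 :=
      Real.rpow_le_one hx0.le hx1.le (pow_nonneg hθ0.le _)
    have h2 : (0:ℝ) ≤ ((k : ℝ) + 1) ^ (-(1 + ε)) := Real.rpow_nonneg (by positivity) _
    show x ^ (θ ^ (k + 1)) * ((k : ℝ) + 1) ^ (-(1 + ε)) ≤ ((k : ℝ) + 1) ^ (-(1 + ε))
    nlinarith
  have hg : Summable (fun k : ℕ => ((k : ℝ) + 1) ^ (-(1 + ε))) := by
    have h := (summable_nat_add_iff
      (f := fun k : ℕ => ((k : ℝ)) ^ (-(1 + ε))) 1).2 (Real.summable_nat_rpow.2 (by linarith))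
    refine h.congr fun k => ?_
    push_cast
    ring_nf
  have hf : Summable f := Summable.of_nonneg_of_le hf_nonneg hfle hg
  -- split
  have hsplit : ∑' k, f k = ∑ k ∈ Finset.range N, f k + ∑' k, f (k + N) :=
    (hf.sum_add_tsum_nat_add N).symm
  -- head bound
  have hhead : ∑ k ∈ Finset.range N, f k ≤ Real.exp (-(L * T)) * (1 + 1 / ε) := by
    have hterm : ∀ k ∈ Finset.range N, f k ≤
        Real.exp (-(L * T)) * ((k : ℝ) + 1) ^ (-(1 + ε)) := by
      intro k hk
      rw [Finset.mem_range] at hk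
      have hpow : T ≤ θ ^ (k + 1) :=
        pow_le_pow_of_le_one hθ0.le hθ1.le (by omega)
      have h1 : x ^ (θ ^ (k + 1)) ≤ Real.exp (-(L * T)) := by
        rw [hfterm k]
        apply Real.exp_le_exp.2
        nlinarith
      have h2 : (0:ℝ) ≤ ((k : ℝ) + 1) ^ (-(1 + ε)) := Real.rpow_nonneg (by positivity) _
      show x ^ (θ ^ (k + 1)) * ((k : ℝ) + 1) ^ (-(1 + ε)) ≤
        Real.exp (-(L * T)) * ((k : ℝ) + 1) ^ (-(1 + ε))
      exact mul_le_mul_of_nonneg_right h1 h2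
    have hsum1 : ∑ k ∈ Finset.range N, ((k : ℝ) + 1) ^ (-(1 + ε)) ≤ 1 + 1 / ε := by
      have h1 : ∑ k ∈ Finset.range N, ((k : ℝ) + 1) ^ (-(1 + ε)) ≤
          ∑' k : ℕ, ((k : ℝ) + 1) ^ (-(1 + ε)) :=
        Summable.sum_le_tsum _ (fun k _ => Real.rpow_nonneg (by positivity) _) hg
      have h2 := Summable.tsum_eq_zero_add hg
      have h3 : ∑' k : ℕ, (((k+1 : ℕ) : ℝ) + 1) ^ (-(1 + ε)) ≤ 1 / ε := by
        have h4 := aux_tail ε hε 1 le_rfl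
        have h5 : ∑' k : ℕ, (((k+1 : ℕ) : ℝ) + 1) ^ (-(1 + ε)) =
            ∑' k : ℕ, ((k : ℝ) + (1:ℕ) + 1) ^ (-(1 + ε)) := by
          congr 1; funext k; push_cast; ring_nf
        rw [h5]
        calc _ ≤ ((1:ℕ) : ℝ) ^ (-ε) / ε := h4
          _ = 1 / ε := by norm_num
      have h6 : (((0:ℕ) : ℝ) + 1) ^ (-(1 + ε)) = 1 := by norm_num
      rw [h2, h6] at h1
      linarith
    calc ∑ k ∈ Finset.range N, f k
        ≤ ∑ k ∈ Finset.range N, Real.exp (-(L * T)) * ((k : ℝ) + 1) ^ (-(1 + ε)) :=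
          Finset.sum_le_sum hterm
      _ = Real.exp (-(L * T)) * ∑ k ∈ Finset.range N, ((k : ℝ) + 1) ^ (-(1 + ε)) := by
          rw [Finset.mul_sum]
      _ ≤ Real.exp (-(L * T)) * (1 + 1 / ε) :=
          mul_le_mul_of_nonneg_left hsum1 (Real.exp_pos _).le
  -- tail bound
  have htail : ∑' k, f (k + N) ≤ (N : ℝ) ^ (-ε) / ε := by
    have hb : Summable (fun k : ℕ => ((k : ℝ) + N + 1) ^ (-(1 + ε))) := by
      have h := (summable_nat_add_iff
        (f := fun k : ℕ => ((k : ℝ)) ^ (-(1 + ε))) (N+1)).2 (Real.summable_nat_rpow.2 (by linarith))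
      refine h.congr fun k => ?_
      push_cast
      ring_nf
    have hfs : Summable (fun k : ℕ => f (k + N)) := (summable_nat_add_iff N).2 hf
    have hle : ∀ k : ℕ, f (k + N) ≤ ((k : ℝ) + N + 1) ^ (-(1 + ε)) := by
      intro k
      calc f (k + N) ≤ (((k + N : ℕ) : ℝ) + 1) ^ (-(1 + ε)) := hfle _
        _ = ((k : ℝ) + N + 1) ^ (-(1 + ε)) := by push_cast; ring_nf
    have h1 : ∑' k, f (k + N) ≤ ∑' k : ℕ, ((k : ℝ) + N + 1) ^ (-(1 + ε)) :=
      Summable.tsum_le_tsum hle hfs hb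
    exact h1.trans (aux_tail ε hε N hN1)

  -- notation
  have he0 : (0:ℝ) < Real.exp 1 := Real.exp_pos 1
  have he27 : (2.7182818283 : ℝ) < Real.exp 1 := Real.exp_one_gt_d9
  set E : ℝ := Real.exp (Real.exp 1 * α⁻¹ * θ⁻¹) with hEdef
  have hE1 : 1 ≤ E := Real.one_le_exp (by positivity)
  have hE0 : 0 < E := lt_of_lt_of_le one_pos hE1
  -- key inequality: M ≤ e α L T + e²/θ
  have hC : M ≤ Real.exp 1 * α * L * T + Real.exp 1 * Real.exp 1 / θ := by
    set w : ℝ := Real.exp (M / 2) with hwdef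
    set v : ℝ := Real.exp (M / 4) with hvdef
    set c : ℝ := Real.exp (3 / 2 : ℝ) with hcdef
    have hw0 : 0 < w := Real.exp_pos _
    have hv0 : 0 < v := Real.exp_pos _
    have hc0 : 0 < c := Real.exp_pos _
    have hwW : w * w = W := by
      rw [hwdef, ← Real.exp_add, show M/2 + M/2 = M by ring, hMdef, Real.exp_log hW0]
    have hvw : v * v = w := by
      rw [hvdef, hwdef, ← Real.exp_add]
      congr 1
      ring
    have hv1 : 1 ≤ v := by
      rw [hvdef]; exact Real.one_le_exp (by linarith)
    have hcc : c * c = Real.exp 1 * Real.exp 1 * Real.exp 1 := by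
      rw [hcdef, ← Real.exp_add, ← Real.exp_add, ← Real.exp_add]
      norm_num
    have hc4 : 4 ≤ c := num_c4 c (Real.exp 1) hc0 hcc he27
    have hw12 : Real.exp (1/2 : ℝ) ≤ w := by
      rw [hwdef]; exact Real.exp_le_exp.2 (by linarith)
    have key1 : M ≤ 4 * (v - 1) := by
      have hlv : Real.log v = M / 4 := by rw [hvdef, Real.log_exp]
      have h := Real.log_le_sub_one_of_pos hv0
      rw [hlv] at h
      linarith only [h]
    have key2 : 4 * (v - 1) ≤ 2 * c * v - c := num_key2 c v hc4 hv1
    have amgm : 2 * c * v ≤ Real.exp 1 * θ * w + Real.exp 1 * Real.exp 1 / θ := by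
      set a : ℝ := Real.exp 1 * θ * w with hadef
      set b : ℝ := Real.exp 1 * Real.exp 1 / θ with hbdef
      have ha0 : 0 < a := by positivity
      have hb0 : 0 < b := by positivity
      have hab : a * b = (c * v) ^ 2 := by
        have h1 : (c * v) ^ 2 = (c * c) * (v * v) := by ring
        rw [h1, hcc, hvw, hadef, hbdef]
        field_simp
      have h := two_mul_le_add_sq (Real.sqrt a) (Real.sqrt b)
      rw [Real.sq_sqrt ha0.le, Real.sq_sqrt hb0.le] at h
      have hs : Real.sqrt a * Real.sqrt b = c * v := by
        have h9 := Real.sqrt_mul ha0.le b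
        rw [hab, Real.sqrt_sq (by positivity)] at h9
        exact h9.symm
      have h2 : 2 * (Real.sqrt a * Real.sqrt b) = 2 * (c * v) := by rw [hs]
      linarith only [h, h2]
    have hstep3 : Real.exp 1 * Real.exp 1 * θ / w ≤ c * θ := by
      rw [div_le_iff₀ hw0]
      have h1 : Real.exp 1 * Real.exp 1 = c * Real.exp (1/2 : ℝ) := by
        rw [hcdef, ← Real.exp_add, ← Real.exp_add]
        norm_num
      have h2 : c * Real.exp (1/2:ℝ) ≤ c * w := mul_le_mul_of_nonneg_left hw12 hc0.le
      have h3 : Real.exp 1 * Real.exp 1 * θ ≤ (c * w) * θ := by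
        rw [h1]
        exact mul_le_mul_of_nonneg_right h2 hθ0.le
      linarith only [h3]
    have hTw : θ / w ≤ T := by
      have h1 : Real.exp (-(M/2)) = w⁻¹ := by rw [hwdef, Real.exp_neg]
      have h2 := hθN
      rw [h1] at h2
      calc θ / w = θ * w⁻¹ := div_eq_mul_inv _ _
        _ ≤ T := h2
    have h5 : Real.exp 1 * θ * w - Real.exp 1 * Real.exp 1 * θ / w ≤
        Real.exp 1 * α * L * T := by
      have hαL : α * L = w * w - Real.exp 1 := by rw [hwW, hWdef]; ring
      have h6 : Real.exp 1 * α * L * (θ / w) ≤ Real.exp 1 * α * L * T :=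
        mul_le_mul_of_nonneg_left hTw (by positivity)
      have h7 : Real.exp 1 * α * L * (θ / w) =
          Real.exp 1 * θ * w - Real.exp 1 * Real.exp 1 * θ / w := by
        rw [show Real.exp 1 * α * L * (θ / w) = Real.exp 1 * (α * L) * θ / w by ring, hαL]
        field_simp
      linarith only [h6, h7]
    have hcθ : c * θ ≤ c := mul_le_of_le_one_right hc0.le hθ1.le
    linarith only [key1, key2, amgm, hstep3, h5, hcθ]
  -- head numeric
  have hMε : M ^ ε ≤ (ε * α) ^ ε * Real.exp (M / (Real.exp 1 * α)) := by
    have hs0 : (0:ℝ) < M / (Real.exp 1 * α) := by positivity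
    have h := aux_srpow ε hε _ hs0
    calc M ^ ε = ((Real.exp 1 * α) * (M / (Real.exp 1 * α))) ^ ε := by
          congr 1
          field_simp
      _ = (Real.exp 1 * α) ^ ε * (M / (Real.exp 1 * α)) ^ ε :=
          Real.mul_rpow (by positivity) hs0.le
      _ ≤ (Real.exp 1 * α) ^ ε * ((ε / Real.exp 1) ^ ε * Real.exp (M / (Real.exp 1 * α))) :=
          mul_le_mul_of_nonneg_left h (by positivity)
      _ = ((Real.exp 1 * α) ^ ε * (ε / Real.exp 1) ^ ε) * Real.exp (M / (Real.exp 1 * α)) := by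
          ring
      _ = (ε * α) ^ ε * Real.exp (M / (Real.exp 1 * α)) := by
          rw [← Real.mul_rpow (by positivity) (by positivity)]
          congr 2
          field_simp
  have hharg : M / (Real.exp 1 * α) - L * T ≤ Real.exp 1 * α⁻¹ * θ⁻¹ := by
    have h1 : M / (Real.exp 1 * α) ≤ L * T + Real.exp 1 * α⁻¹ * θ⁻¹ := by
      rw [div_le_iff₀ (by positivity)]
      calc M ≤ Real.exp 1 * α * L * T + Real.exp 1 * Real.exp 1 / θ := hC
        _ = (L * T + Real.exp 1 * α⁻¹ * θ⁻¹) * (Real.exp 1 * α) := by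
            field_simp
    linarith only [h1]
  have hhead2 : Real.exp (-(L * T)) * M ^ ε ≤ (ε * α) ^ ε * E := by
    calc Real.exp (-(L * T)) * M ^ ε
        ≤ Real.exp (-(L * T)) * ((ε * α) ^ ε * Real.exp (M / (Real.exp 1 * α))) :=
          mul_le_mul_of_nonneg_left hMε (Real.exp_pos _).le
      _ = (ε * α) ^ ε * Real.exp (M / (Real.exp 1 * α) - L * T) := by
          rw [Real.exp_sub, Real.exp_neg]
          ring
      _ ≤ (ε * α) ^ ε * E :=
          mul_le_mul_of_nonneg_left (Real.exp_le_exp.2 hharg) (by positivity)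
  have hMεpos : (0:ℝ) < M ^ ε := Real.rpow_pos_of_pos hM0 _
  have hMnpos : (0:ℝ) < M ^ (-ε) := Real.rpow_pos_of_pos hM0 _
  have hMinv : M ^ (-ε) = (M ^ ε)⁻¹ := Real.rpow_neg hM0.le _
  have hhead3 : Real.exp (-(L * T)) ≤ (ε * α) ^ ε * E * M ^ (-ε) := by
    rw [hMinv, ← div_eq_mul_inv, le_div_iff₀ hMεpos]
    exact hhead2
  -- tail numeric
  have htail2 : (N:ℝ) ^ (-ε) ≤ (Real.exp 1 * ε * α) ^ ε * E * M ^ (-ε) := by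
    have h1 : (N:ℝ) ^ (-ε) ≤ (M / (2*l)) ^ (-ε) :=
      Real.rpow_le_rpow_of_nonpos hql hNge (by linarith)
    have h2 : (M / (2*l)) ^ (-ε) = (2*l) ^ ε * M ^ (-ε) := by
      rw [Real.rpow_neg hql.le, Real.div_rpow hM0.le (by linarith), inv_div,
        div_eq_mul_inv, hMinv]
    have h3 : (2*l) ^ ε ≤ (Real.exp 1 * ε * α) ^ ε * E := by
      have hz0 : (0:ℝ) < 2*l / (Real.exp 1 * ε * α) := by positivity
      have h4 : (2*l) ^ ε = (Real.exp 1 * ε * α) ^ ε * (2*l / (Real.exp 1 * ε * α)) ^ ε := by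
        rw [← Real.mul_rpow (by positivity) hz0.le]
        congr 1
        field_simp
      have h5 := aux_zrpow ε hε _ hz0
      have h6 : ε * (2*l / (Real.exp 1 * ε * α)) = 2*l / (Real.exp 1 * α) := by
        field_simp
      have hlθ : l ≤ θ⁻¹ := by
        have h8 := Real.log_le_sub_one_of_pos (inv_pos.2 hθ0)
        rw [Real.log_inv] at h8
        rw [hldef]
        linarith only [h8]
      have h7 : 2*l / (Real.exp 1 * α) ≤ Real.exp 1 * α⁻¹ * θ⁻¹ := by
        rw [div_le_iff₀ (by positivity)]
        have h9 : Real.exp 1 * α⁻¹ * θ⁻¹ * (Real.exp 1 * α) =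
            (Real.exp 1 * Real.exp 1) * θ⁻¹ := by
          field_simp
        rw [h9]
        exact num_h7 l θ⁻¹ (Real.exp 1 * Real.exp 1) hlθ (by positivity)
          (num_e2 _ he27) hl
      calc (2*l) ^ ε = (Real.exp 1 * ε * α) ^ ε * (2*l / (Real.exp 1 * ε * α)) ^ ε := h4
        _ ≤ (Real.exp 1 * ε * α) ^ ε * Real.exp (ε * (2*l / (Real.exp 1 * ε * α))) :=
            mul_le_mul_of_nonneg_left h5 (by positivity)
        _ = (Real.exp 1 * ε * α) ^ ε * Real.exp (2*l / (Real.exp 1 * α)) := by rw [h6]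
        _ ≤ (Real.exp 1 * ε * α) ^ ε * E :=
            mul_le_mul_of_nonneg_left (Real.exp_le_exp.2 h7) (by positivity)
    calc (N:ℝ) ^ (-ε) ≤ (M / (2*l)) ^ (-ε) := h1
      _ = (2*l) ^ ε * M ^ (-ε) := h2
      _ ≤ ((Real.exp 1 * ε * α) ^ ε * E) * M ^ (-ε) :=
          mul_le_mul_of_nonneg_right h3 hMnpos.le
      _ = _ := by ring
  -- final assembly
  have hεα : (ε * α) ^ ε = ε ^ ε * α ^ ε := Real.mul_rpow hε.le hα.le
  have heεα : (Real.exp 1 * ε * α) ^ ε = Real.exp ε * (ε ^ ε * α ^ ε) := by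
    rw [show Real.exp 1 * ε * α = Real.exp 1 * (ε * α) by ring,
      Real.mul_rpow he0.le (by positivity), Real.exp_one_rpow, hεα]
  have hexpand : Real.exp (ε * Real.log ε + ε + Real.exp 1 * α⁻¹ * θ⁻¹) =
      ε ^ ε * Real.exp ε * E := by
    rw [Real.exp_add, Real.exp_add, hEdef]
    have h1 : Real.exp (ε * Real.log ε) = ε ^ ε := by
      rw [Real.rpow_def_of_pos hε, mul_comm]
    rw [h1]
  have h1e : 1 + 1/ε ≤ Real.exp ε / ε := by
    rw [le_div_iff₀ hε]
    have h2 : (1 + 1/ε) * ε = ε + 1 := by field_simp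
    rw [h2]
    exact Real.add_one_le_exp ε
  have hεε : (0:ℝ) < ε ^ ε := Real.rpow_pos_of_pos hε _
  have hαε : (0:ℝ) < α ^ ε := Real.rpow_pos_of_pos hα _
  have hexpε : (0:ℝ) < Real.exp ε := Real.exp_pos _
  calc ∑' k, f k = ∑ k ∈ Finset.range N, f k + ∑' k, f (k + N) := hsplit
    _ ≤ Real.exp (-(L * T)) * (1 + 1/ε) + (N:ℝ) ^ (-ε) / ε := add_le_add hhead htail
    _ ≤ (ε * α) ^ ε * E * M ^ (-ε) * (Real.exp ε / ε) +
        (Real.exp 1 * ε * α) ^ ε * E * M ^ (-ε) / ε := by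
        have hp1 : (0:ℝ) ≤ 1 + 1/ε := by positivity
        have ha1 := mul_le_mul hhead3 h1e hp1 (by positivity)
        have ha2 : (N:ℝ) ^ (-ε) / ε ≤ (Real.exp 1 * ε * α) ^ ε * E * M ^ (-ε) / ε := by
          gcongr
        linarith only [ha1, ha2]
    _ ≤ 4 / ε * α ^ ε * (ε ^ ε * Real.exp ε * E) * M ^ (-ε) := by
        rw [hεα, heεα]
        exact num_final (ε ^ ε) (α ^ ε) E (M ^ (-ε)) ε (Real.exp ε)
          hεε.le hαε.le hE0.le hMnpos.le hexpε.le hε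
    _ = 4 / ε * α ^ ε * Real.exp (ε * Real.log ε + ε + Real.exp 1 * α⁻¹ * θ⁻¹) *
        M ^ (-ε) := by rw [hexpand]
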